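/- arXiv:1709.02573 — 2 statements merged into one kernel-verified Lean document; each statement's English description precedes it below -/
import Mathlib

section
/- Let p : P → exp_3(S¹) be p(x,y,z) = {e^{2πix}, e^{2πiy}, e^{2πiz}}, where P = {(x,y,z) ∈ ℝ³ : x ≤ y ≤ z ≤ x+1, 0 ≤ x+y+z ≤ 1}. Then the induced map p̄ : P/∼ → exp_3(S¹), where (u ∼ v) ⟺ (p(u) = p(v)) and P/∼ has the quotient topology, is a homeomorphism. -/
open Set Real

/-- The `k`-th symmetric potency: nonempty subsets of `X` of cardinality at most `k`. -/
def SymPot (X : Type*) (k : ℕ) : Type _ :=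
  {A : Set X // 0 < A.ncard ∧ A.ncard ≤ k}

/-- The quotient topology on `exp_k X` induced by `π : X^k → exp_k X`. -/
def symPotProj (X : Type*) (k : ℕ) [NeZero k] : (Fin k → X) → SymPot X k :=
  fun x => ⟨Set.range x, by
    constructor
    · exact (Set.ncard_pos (Set.finite_range x)).mpr (Set.range_nonempty x)
    · calc (Set.range x).ncard = Nat.card (Set.range x) := (Nat.card_coe_set_eq _).symm
        _ ≤ Nat.card (Fin k) := Finite.card_range_le x
        _ = k := Nat.card_eq_fintype_card.trans (Fintype.card_fin k)⟩

instance (X : Type*) (k : ℕ) [TopologicalSpace X] [NeZero k] :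
    TopologicalSpace (SymPot X k) :=
  TopologicalSpace.coinduced (symPotProj X k) inferInstance

/-- Morton's prism `P`. -/
def prismP : Set (ℝ × ℝ × ℝ) :=
  {v | v.1 ≤ v.2.1 ∧ v.2.1 ≤ v.2.2 ∧ v.2.2 ≤ v.1 + 1 ∧
    0 ≤ v.1 + v.2.1 + v.2.2 ∧ v.1 + v.2.1 + v.2.2 ≤ 1}

/-- The subset `{a, b, c}` of the circle, as an element of `exp_3 S¹`. -/
def tripleSet (a b c : Circle) : SymPot Circle 3 :=
  ⟨{a, b, c}, by
    refine ⟨(Set.ncard_pos (Set.toFinite _)).mpr ⟨a, by simp⟩, ?_⟩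
    calc ({a, b, c} : Set Circle).ncard ≤ ({b, c} : Set Circle).ncard + 1 :=
          Set.ncard_insert_le a _
      _ ≤ (({c} : Set Circle).ncard + 1) + 1 := by
          exact Nat.add_le_add_right (Set.ncard_insert_le b _) 1
      _ = 3 := by rw [Set.ncard_singleton]⟩

/-- The map `p : P → exp_3 S¹`, `p (x,y,z) = {e^{2πix}, e^{2πiy}, e^{2πiz}}`. -/
noncomputable def prismMap (v : prismP) : SymPot Circle 3 :=
  tripleSet (Circle.exp (2 * π * v.1.1)) (Circle.exp (2 * π * v.1.2.1))
    (Circle.exp (2 * π * v.1.2.2))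

/-! ### Auxiliary lemmas -/

section Aux

lemma symPotProj_continuous (X : Type*) (k : ℕ) [TopologicalSpace X] [NeZero k] :
    Continuous (symPotProj X k) :=
  continuous_coinduced_rng

lemma symPot_isOpen_iff {X : Type*} {k : ℕ} [TopologicalSpace X] [NeZero k]
    {s : Set (SymPot X k)} : IsOpen s ↔ IsOpen (symPotProj X k ⁻¹' s) :=
  isOpen_coinduced

/-- Separation helper for the Hausdorffness of `SymPot Circle 3`. -/
lemma symPot_sep {A B : SymPot Circle 3} {a : Circle} (ha : a ∈ A.1) (hb : a ∉ B.1) :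
    ∃ u v : Set (SymPot Circle 3),
      IsOpen u ∧ IsOpen v ∧ A ∈ u ∧ B ∈ v ∧ Disjoint u v := by
  have hBfin : B.1.Finite := Set.finite_of_ncard_pos B.2.1
  have hBne : B.1.Nonempty := Set.nonempty_of_ncard_ne_zero B.2.1.ne' 
  have hBcl : IsClosed B.1 := hBfin.isClosed
  have hd : 0 < Metric.infDist a B.1 := (hBcl.notMem_iff_infDist_pos hBne).mp hb
  set ε : ℝ := Metric.infDist a B.1 / 2 with hε
  have hεpos : 0 < ε := by positivity
  set W : Set Circle := ⋃ b ∈ B.1, Metric.ball b ε with hW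
  have hWopen : IsOpen W := isOpen_biUnion fun b _ => Metric.isOpen_ball
  refine ⟨{C | (C.1 ∩ Metric.ball a ε).Nonempty}, {C | C.1 ⊆ W}, ?_, ?_, ?_, ?_, ?_⟩
  · rw [symPot_isOpen_iff]
    have : symPotProj Circle 3 ⁻¹' {C | (C.1 ∩ Metric.ball a ε).Nonempty}
        = ⋃ i : Fin 3, (fun x : Fin 3 → Circle => x i) ⁻¹' Metric.ball a ε := by
      ext x
      simp only [symPotProj, Set.mem_preimage, Set.mem_setOf_eq, Set.mem_iUnion]
      constructor
      · rintro ⟨c, ⟨i, rfl⟩, hc⟩; exact ⟨i, hc⟩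
      · rintro ⟨i, hi⟩; exact ⟨x i, ⟨i, rfl⟩, hi⟩
    rw [this]
    exact isOpen_iUnion fun i => Metric.isOpen_ball.preimage (continuous_apply i)
  · rw [symPot_isOpen_iff]
    have : symPotProj Circle 3 ⁻¹' {C | C.1 ⊆ W}
        = ⋂ i : Fin 3, (fun x : Fin 3 → Circle => x i) ⁻¹' W := by
      ext x
      simp only [symPotProj, Set.mem_preimage, Set.mem_iInter]
      constructor
      · intro h i; exact h ⟨i, rfl⟩
      · rintro h c ⟨i, rfl⟩; exact h i
    rw [this]
    exact isOpen_iInter_of_finite fun i => hWopen.preimage (continuous_apply i)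
  · exact ⟨a, ha, Metric.mem_ball_self hεpos⟩
  · intro b hbB
    exact Set.mem_biUnion hbB (Metric.mem_ball_self hεpos)
  · rw [Set.disjoint_left]
    rintro C ⟨c, hcC, hcb⟩ hCW
    obtain ⟨b, hbB, hcb'⟩ := Set.mem_iUnion₂.mp (hCW hcC)
    have h1 : dist a b ≤ dist a c + dist c b := dist_triangle a c b
    have h2 : Metric.infDist a B.1 ≤ dist a b := Metric.infDist_le_dist_of_mem hbB
    rw [Metric.mem_ball] at hcb hcb'
    rw [dist_comm] at hcb
    linarith

lemma symPot_t2 : T2Space (SymPot Circle 3) := by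
  constructor
  intro A B hAB
  by_cases h : ∃ a, a ∈ A.1 ∧ a ∉ B.1
  · obtain ⟨a, ha, hb⟩ := h
    obtain ⟨u, v, hu, hv, hAu, hBv, hd⟩ := symPot_sep ha hb
    exact ⟨u, v, hu, hv, hAu, hBv, hd⟩
  · push_neg at h
    have h2 : ∃ b, b ∈ B.1 ∧ b ∉ A.1 := by
      by_contra h2
      push_neg at h2
      exact hAB (Subtype.ext (Set.Subset.antisymm h h2))
    obtain ⟨b, hb, ha⟩ := h2
    obtain ⟨u, v, hu, hv, hBu, hAv, hd⟩ := symPot_sep hb ha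
    exact ⟨v, u, hv, hu, hAv, hBu, hd.symm⟩

lemma range_triple {α : Type*} (a b c : α) : Set.range ![a, b, c] = {a, b, c} := by
  ext x
  constructor
  · rintro ⟨i, rfl⟩
    fin_cases i <;> simp
  · rintro (rfl | rfl | rfl)
    exacts [⟨0, rfl⟩, ⟨1, rfl⟩, ⟨2, rfl⟩]

lemma prismMap_eq (v : prismP) : prismMap v = symPotProj Circle 3
    ![Circle.exp (2 * π * v.1.1), Circle.exp (2 * π * v.1.2.1),
      Circle.exp (2 * π * v.1.2.2)] := by
  apply Subtype.ext
  show ({_, _, _} : Set Circle) = Set.range _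
  rw [range_triple]

lemma prismMap_continuous : Continuous prismMap := by
  have heq : prismMap = (symPotProj Circle 3) ∘ fun v : prismP =>
      ![Circle.exp (2 * π * v.1.1), Circle.exp (2 * π * v.1.2.1),
        Circle.exp (2 * π * v.1.2.2)] := funext prismMap_eq
  rw [heq]
  refine (symPotProj_continuous _ _).comp (continuous_pi fun i => ?_)
  have h1 : Continuous fun v : prismP => (v : ℝ × ℝ × ℝ).1 :=
    continuous_fst.comp continuous_subtype_val
  have h2 : Continuous fun v : prismP => (v : ℝ × ℝ × ℝ).2.1 :=
    continuous_fst.comp (continuous_snd.comp continuous_subtype_val)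
  have h3 : Continuous fun v : prismP => (v : ℝ × ℝ × ℝ).2.2 :=
    continuous_snd.comp (continuous_snd.comp continuous_subtype_val)
  fin_cases i
  · exact Circle.exp.continuous.comp (continuous_const.mul h1)
  · exact Circle.exp.continuous.comp (continuous_const.mul h2)
  · exact Circle.exp.continuous.comp (continuous_const.mul h3)

lemma sort3 (a b c : ℝ) :
    ∃ x y z : ℝ, x ≤ y ∧ y ≤ z ∧ ({x, y, z} : Set ℝ) = {a, b, c} := by
  rcases le_total a b with hab | hab <;> rcases le_total b c with hbc | hbc <;>
    rcases le_total a c with hac | hac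
  · exact ⟨a, b, c, hab, hbc, rfl⟩
  · exact ⟨a, b, c, hab, hbc, rfl⟩
  · exact ⟨a, c, b, hac, hbc, by ext x; simp; tauto⟩
  · exact ⟨c, a, b, hac, hab, by ext x; simp; tauto⟩
  · exact ⟨b, a, c, hab, hac, by ext x; simp; tauto⟩
  · exact ⟨b, c, a, hbc, hac, by ext x; simp; tauto⟩
  · exact ⟨c, b, a, hbc, hab, by ext x; simp; tauto⟩
  · exact ⟨c, b, a, hbc, hab, by ext x; simp; tauto⟩

lemma exp_shift_add (t : ℝ) : Circle.exp (2 * π * (t + 1)) = Circle.exp (2 * π * t) := by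
  rw [show 2 * π * (t + 1) = 2 * π * t + 2 * π by ring, Circle.exp_add_two_pi]

lemma exp_shift_sub (t : ℝ) : Circle.exp (2 * π * (t - 1)) = Circle.exp (2 * π * t) := by
  rw [show 2 * π * (t - 1) = 2 * π * t - 2 * π by ring, Circle.exp_sub_two_pi]

lemma circle_lift (d : Circle) :
    ∃ t : ℝ, -(1 / 2) < t ∧ t ≤ 1 / 2 ∧ Circle.exp (2 * π * t) = d := by
  have hπ := pi_pos
  refine ⟨Complex.arg (d : ℂ) / (2 * π), ?_, ?_, ?_⟩
  · have := Complex.neg_pi_lt_arg (d : ℂ)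
    rw [lt_div_iff₀ (by positivity)]
    linarith
  · have := Complex.arg_le_pi (d : ℂ)
    rw [div_le_iff₀ (by positivity)]
    linarith
  · rw [show 2 * π * (Complex.arg (d : ℂ) / (2 * π)) = Complex.arg (d : ℂ) by
      field_simp]
    exact Circle.exp_arg d

lemma exists_triple (A : SymPot Circle 3) : ∃ a b c : Circle, A.1 = {a, b, c} := by
  have h1 := A.2.1
  have h3 := A.2.2
  have : A.1.ncard = 1 ∨ A.1.ncard = 2 ∨ A.1.ncard = 3 := by omega
  rcases this with h | h | h
  · obtain ⟨a, ha⟩ := Set.ncard_eq_one.mp h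
    exact ⟨a, a, a, by simp [ha]⟩
  · obtain ⟨a, b, _, hab⟩ := Set.ncard_eq_two.mp h
    exact ⟨a, a, b, by simp [hab]⟩
  · obtain ⟨a, b, c, _, _, _, habc⟩ := Set.ncard_eq_three.mp h
    exact ⟨a, b, c, habc⟩

lemma prismMap_surjective : Function.Surjective prismMap := by
  intro A
  obtain ⟨a, b, c, hA⟩ := exists_triple A
  obtain ⟨ta, hta1, hta2, hta3⟩ := circle_lift a
  obtain ⟨tb, htb1, htb2, htb3⟩ := circle_lift b
  obtain ⟨tc, htc1, htc2, htc3⟩ := circle_lift c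
  obtain ⟨x, y, z, hxy, hyz, hset⟩ := sort3 ta tb tc
  have bnd : ∀ t ∈ ({ta, tb, tc} : Set ℝ), -(1 / 2) < t ∧ t ≤ 1 / 2 := by
    rintro t (rfl | rfl | rfl)
    exacts [⟨hta1, hta2⟩, ⟨htb1, htb2⟩, ⟨htc1, htc2⟩]
  obtain ⟨hx1, hx2⟩ := bnd x (hset ▸ (by simp : x ∈ ({x, y, z} : Set ℝ)))
  obtain ⟨hy1, hy2⟩ := bnd y (hset ▸ (by simp : y ∈ ({x, y, z} : Set ℝ)))
  obtain ⟨hz1, hz2⟩ := bnd z (hset ▸ (by simp : z ∈ ({x, y, z} : Set ℝ)))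
  have himg : ({Circle.exp (2 * π * x), Circle.exp (2 * π * y), Circle.exp (2 * π * z)} :
      Set Circle) = A.1 := by
    have h1 : (fun t : ℝ => Circle.exp (2 * π * t)) '' {x, y, z}
        = (fun t : ℝ => Circle.exp (2 * π * t)) '' {ta, tb, tc} := by rw [hset]
    simp only [Set.image_insert_eq, Set.image_singleton] at h1
    rw [h1, hta3, htb3, htc3, hA]
  rcases le_or_gt 0 (x + y + z) with hs0 | hs0
  · rcases le_or_gt (x + y + z) 1 with hs1 | hs1
    · -- sum in [0,1]
      have hv : ((x, y, z) : ℝ × ℝ × ℝ) ∈ prismP := by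
        refine ⟨?_, ?_, ?_, ?_, ?_⟩ <;> (dsimp only; linarith)
      refine ⟨⟨(x, y, z), hv⟩, ?_⟩
      apply Subtype.ext
      exact himg
    · -- sum in (1, 3/2]
      have hv : ((z - 1, x, y) : ℝ × ℝ × ℝ) ∈ prismP := by
        refine ⟨?_, ?_, ?_, ?_, ?_⟩ <;> (dsimp only; linarith)
      refine ⟨⟨(z - 1, x, y), hv⟩, ?_⟩
      apply Subtype.ext
      show ({Circle.exp (2 * π * (z - 1)), Circle.exp (2 * π * x),
        Circle.exp (2 * π * y)} : Set Circle) = A.1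
      rw [exp_shift_sub, ← himg]
      ext w; simp; tauto
  · rcases le_or_gt (-1) (x + y + z) with hs1 | hs1
    · -- sum in [-1, 0)
      have hv : ((y, z, x + 1) : ℝ × ℝ × ℝ) ∈ prismP := by
        refine ⟨?_, ?_, ?_, ?_, ?_⟩ <;> (dsimp only; linarith)
      refine ⟨⟨(y, z, x + 1), hv⟩, ?_⟩
      apply Subtype.ext
      show ({Circle.exp (2 * π * y), Circle.exp (2 * π * z),
        Circle.exp (2 * π * (x + 1))} : Set Circle) = A.1
      rw [exp_shift_add, ← himg]
      ext w; simp; tauto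
    · -- sum in (-3/2, -1)
      have hv : ((z, x + 1, y + 1) : ℝ × ℝ × ℝ) ∈ prismP := by
        refine ⟨?_, ?_, ?_, ?_, ?_⟩ <;> (dsimp only; linarith)
      refine ⟨⟨(z, x + 1, y + 1), hv⟩, ?_⟩
      apply Subtype.ext
      show ({Circle.exp (2 * π * z), Circle.exp (2 * π * (x + 1)),
        Circle.exp (2 * π * (y + 1))} : Set Circle) = A.1
      rw [exp_shift_add, exp_shift_add, ← himg]
      ext w; simp; tauto

lemma prismP_isCompact : IsCompact prismP := by
  have hclosed : IsClosed prismP := by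
    have heq : prismP = {v : ℝ × ℝ × ℝ | v.1 ≤ v.2.1} ∩ {v | v.2.1 ≤ v.2.2}
        ∩ {v | v.2.2 ≤ v.1 + 1} ∩ {v | 0 ≤ v.1 + v.2.1 + v.2.2}
        ∩ {v | v.1 + v.2.1 + v.2.2 ≤ 1} := by
      ext v; simp [prismP]; tauto
    rw [heq]
    refine ((((isClosed_le (by fun_prop) (by fun_prop)).inter
      (isClosed_le (by fun_prop) (by fun_prop))).inter
      (isClosed_le (by fun_prop) (by fun_prop))).inter
      (isClosed_le (by fun_prop) (by fun_prop))).inter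
      (isClosed_le (by fun_prop) (by fun_prop))
  refine IsCompact.of_isClosed_subset
    (isCompact_Icc (a := ((-1 : ℝ), (-1 : ℝ), (-1 : ℝ))) (b := (2, 2, 2))) hclosed ?_
  rintro ⟨x, y, z⟩ ⟨h1, h2, h3, h4, h5⟩
  simp only [Set.mem_Icc, Prod.mk_le_mk]
  exact ⟨⟨by linarith, by linarith, by linarith⟩, ⟨by linarith, by linarith, by linarith⟩⟩

end Aux

/-- the induced map `p̄ : P/∼ → exp_3 S¹` is a homeomorphism. -/
theorem prismMap_quotient_homeomorph :
    ∃ h : Quotient (Setoid.ker prismMap) ≃ₜ SymPot Circle 3,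
      ∀ v : prismP, h (Quotient.mk _ v) = prismMap v := by
  haveI : T2Space (SymPot Circle 3) := symPot_t2
  haveI : CompactSpace prismP := isCompact_iff_compactSpace.mp prismP_isCompact
  haveI : CompactSpace (Quotient (Setoid.ker prismMap)) := Quotient.compactSpace
  let f : Quotient (Setoid.ker prismMap) → SymPot Circle 3 :=
    Quotient.lift prismMap fun _ _ h => h
  have hcont : Continuous f := prismMap_continuous.quotient_lift _
  have hbij : Function.Bijective f := by
    refine ⟨Setoid.kerLift_injective prismMap, fun A => ?_⟩
    obtain ⟨v, hv⟩ := prismMap_surjective A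
    exact ⟨Quotient.mk _ v, hv⟩
  exact ⟨Continuous.homeoOfEquivCompactToT2 (f := Equiv.ofBijective f hbij) hcont,
    fun v => rfl⟩
end

section
/- Let P = {(x,y,z) ∈ ℝ³ : x ≤ y ≤ z ≤ x+1, 0 ≤ x+y+z ≤ 1} and p(x,y,z) = {e^{2πix}, e^{2πiy}, e^{2πiz}}. Then p⁻¹(exp_1(S¹)) = D, where D = {(x,y,z) ∈ P : (x = y = z) or (x = y = z−1) or (x+1 = y = z)}. -/
open Set Real

lemma exp2pi_eq_iff (a b : ℝ) :
    Circle.exp (2 * π * a) = Circle.exp (2 * π * b) ↔ ∃ m : ℤ, a = b + m := by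
  rw [Circle.exp_eq_exp]
  constructor
  · rintro ⟨m, hm⟩
    refine ⟨m, ?_⟩
    have hπ : (2 * π) ≠ 0 := by positivity
    have : 2 * π * a = 2 * π * (b + m) := by ring_nf; ring_nf at hm; linarith
    exact mul_left_cancel₀ hπ this
  · rintro ⟨m, hm⟩; exact ⟨m, by rw [hm]; ring⟩

/-- `p ⁻¹ (exp_1 S¹) = D`. -/
theorem prismMap_preimage_exp1 :
    prismMap ⁻¹' {A : SymPot Circle 3 | A.1.ncard ≤ 1} =
      {v : prismP | (v.1.1 = v.1.2.1 ∧ v.1.2.1 = v.1.2.2) ∨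
        (v.1.1 = v.1.2.1 ∧ v.1.2.1 = v.1.2.2 - 1) ∨
        (v.1.1 + 1 = v.1.2.1 ∧ v.1.2.1 = v.1.2.2)} := by
  ext ⟨⟨x, y, z⟩, hxy, hyz, hzx, hs0, hs1⟩
  simp only [mem_preimage, mem_setOf_eq]
  dsimp only at hxy hyz hzx hs0 hs1
  show ({Circle.exp (2 * π * x), Circle.exp (2 * π * y), Circle.exp (2 * π * z)} :
      Set Circle).ncard ≤ 1 ↔
    (x = y ∧ y = z) ∨ (x = y ∧ y = z - 1) ∨ (x + 1 = y ∧ y = z)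
  constructor
  · intro h
    rw [Set.ncard_le_one (Set.toFinite _)] at h
    have hab : Circle.exp (2 * π * x) = Circle.exp (2 * π * y) :=
      h _ (by simp) _ (by simp)
    have hbc : Circle.exp (2 * π * y) = Circle.exp (2 * π * z) :=
      h _ (by simp) _ (by simp)
    obtain ⟨m, hm⟩ := (exp2pi_eq_iff _ _).mp hab
    obtain ⟨n, hn⟩ := (exp2pi_eq_iff _ _).mp hbc
    have hmle : m ≤ 0 := by exact_mod_cast (by linarith : (m : ℝ) ≤ 0)
    have hnle : n ≤ 0 := by exact_mod_cast (by linarith : (n : ℝ) ≤ 0)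
    have hsum : -1 ≤ m + n := by exact_mod_cast (by push_cast; linarith : (-1 : ℝ) ≤ m + n)
    have hmge : -1 ≤ m := by omega
    have hnge : -1 ≤ n := by omega
    interval_cases m <;> interval_cases n <;> push_cast at hm hn <;>
      first
        | omega
        | (left; exact ⟨by linarith, by linarith⟩)
        | (right; left; exact ⟨by linarith, by linarith⟩)
        | (right; right; exact ⟨by linarith, by linarith⟩)
  · rintro (⟨h1, h2⟩ | ⟨h1, h2⟩ | ⟨h1, h2⟩)
    · rw [h1, h2]
      simp [Set.ncard_singleton]
    · have hz : Circle.exp (2 * π * z) = Circle.exp (2 * π * y) :=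
        (exp2pi_eq_iff _ _).mpr ⟨1, by push_cast; linarith⟩
      rw [h1, hz]
      simp [Set.ncard_singleton]
    · have hx' : Circle.exp (2 * π * x) = Circle.exp (2 * π * y) :=
        (exp2pi_eq_iff _ _).mpr ⟨-1, by push_cast; linarith⟩
      rw [hx', ← h2]
      simp [Set.ncard_singleton]
end
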